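/- Under the hypotheses of the eco-epidemiological system, for any nonnegative solution, limsup_{t→∞} (a^u S(t) + r I(t) + P(t)) ≤ Θ^u and liminf_{t→∞} (a^ℓ S(t) + r I(t) + P(t)) ≥ Θ^ℓ, where Θ^u = a^u Λ^u / min{μ, δ₁} and Θ^ℓ = max{0, (a^ℓ Λ^ℓ - δ₂ (Θ^u)²)/max{c, δ₁}}. -/

import Mathlib

open Real Filter

lemma gron_aux (m A t₀ : ℝ) (hm : 0 < m) (W w : ℝ → ℝ)
    (hW : ∀ t, t₀ ≤ t → HasDerivAt W (w t) t)
    (hw : ∀ t, t₀ ≤ t → w t ≤ A - m * W t) :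
    ∀ ε > 0, ∀ᶠ t in atTop, W t ≤ A / m + ε := by
  intro ε hε
  set u : ℝ → ℝ := fun t => (W t - A / m) * Real.exp (m * t) with hu_def
  have hu : ∀ t, t₀ ≤ t →
      HasDerivAt u ((w t + m * (W t - A / m)) * Real.exp (m * t)) t := by
    intro t ht
    have h1 : HasDerivAt (fun t => W t - A / m) (w t) t := (hW t ht).sub_const _
    have h2 : HasDerivAt (fun t => Real.exp (m * t)) (Real.exp (m * t) * (m * 1)) t :=
      HasDerivAt.exp ((hasDerivAt_id t).const_mul m)
    have := h1.mul h2
    exact this.congr_deriv (by ring)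
  have anti : AntitoneOn u (Set.Ici t₀) := by
    apply antitoneOn_of_deriv_nonpos (convex_Ici t₀)
    · exact fun t ht => ((hu t ht).continuousAt).continuousWithinAt
    · intro t ht
      rw [interior_Ici] at ht
      exact (hu t (le_of_lt ht)).differentiableAt.differentiableWithinAt
    · intro t ht
      rw [interior_Ici] at ht
      rw [(hu t (le_of_lt ht)).deriv]
      have h1 : w t + m * (W t - A / m) ≤ 0 := by
        have := hw t (le_of_lt ht)
        have hmA : m * (A / m) = A := by field_simp
        nlinarith
      have h2 : (0:ℝ) < Real.exp (m * t) := Real.exp_pos _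
      nlinarith
  have key : ∀ t, t₀ ≤ t → W t ≤ A / m + (W t₀ - A / m) * Real.exp (m * (t₀ - t)) := by
    intro t ht
    have := anti (Set.self_mem_Ici) (Set.mem_Ici.mpr ht) ht
    have hexp : (0:ℝ) < Real.exp (m * t) := Real.exp_pos _
    have : W t - A / m ≤ (W t₀ - A / m) * Real.exp (m * t₀) / Real.exp (m * t) := by
      rw [le_div_iff₀ hexp]; exact this
    have heq : Real.exp (m * t₀) / Real.exp (m * t) = Real.exp (m * (t₀ - t)) := by
      rw [← Real.exp_sub]; ring_nf
    rw [mul_div_assoc, heq] at this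
    linarith
  have htend : Tendsto (fun t => A / m + (W t₀ - A / m) * Real.exp (m * (t₀ - t)))
      atTop (nhds (A / m)) := by
    have h1 : Tendsto (fun t : ℝ => m * (t₀ - t)) atTop atBot := by
      apply Tendsto.const_mul_atBot hm
      have h0 : Tendsto (fun t : ℝ => t₀ + -t) atTop atBot :=
        tendsto_atBot_add_const_left _ t₀ tendsto_neg_atTop_atBot
      exact h0.congr (fun x => by ring)
    have h2 : Tendsto (fun t => Real.exp (m * (t₀ - t))) atTop (nhds 0) :=
      Real.tendsto_exp_atBot.comp h1
    have := (h2.const_mul (W t₀ - A / m)).const_add (A / m)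
    simpa using this
  have hev : ∀ᶠ t in atTop,
      A / m + (W t₀ - A / m) * Real.exp (m * (t₀ - t)) < A / m + ε :=
    htend.eventually (gt_mem_nhds (by linarith))
  filter_upwards [hev, eventually_ge_atTop t₀] with t h1 h2
  linarith [key t h2]

set_option maxHeartbeats 1000000 in
theorem stmt9 (μ β r c γ δ₁ δ₂ η Λℓ Λu t₀ : ℝ)
    (l : ℝ → ℝ) (f g : ℝ → ℝ → ℝ → ℝ) (S I P : ℝ → ℝ)
    (hμ : 0 < μ) (hβ : 0 < β) (hr : 0 < r) (hc : 0 < c) (hγ : 0 < γ)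
    (hδ₁ : 0 < δ₁) (hδ₂ : 0 < δ₂) (hη : 0 < η) (hμc : μ < c)
    (hΛℓ : 0 < Λℓ) (hΛ : Λℓ ≤ Λu)
    (hl : Continuous l) (hlb : ∀ t, Λℓ ≤ l t ∧ l t ≤ Λu)
    (hf_nonneg : ∀ x y z, 0 ≤ x → 0 ≤ y → 0 ≤ z → 0 ≤ f x y z)
    (hg_nonneg : ∀ x y z, 0 ≤ x → 0 ≤ y → 0 ≤ z → 0 ≤ g x y z)
    (hpos : ∀ t, t₀ ≤ t → 0 ≤ S t ∧ 0 ≤ I t ∧ 0 ≤ P t)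
    (hS : ∀ t, t₀ ≤ t → HasDerivAt S
      (l t - μ * S t - f (S t) (I t) (P t) * P t - β * S t * I t) t)
    (hI : ∀ t, t₀ ≤ t → HasDerivAt I
      (β * S t * I t - η * g (S t) (I t) (P t) * I t - c * I t) t)
    (hP : ∀ t, t₀ ≤ t → HasDerivAt P
      (γ * f (S t) (I t) (P t) * P t + r * η * g (S t) (I t) (P t) * I t
        - δ₁ * P t - δ₂ * (P t) ^ 2) t) :
    limsup (fun t => max γ r * S t + r * I t + P t) atTop ≤
      max γ r * Λu / min μ δ₁ ∧
    max 0 ((min γ r * Λℓ - δ₂ * (max γ r * Λu / min μ δ₁) ^ 2) / max c δ₁) ≤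
      liminf (fun t => min γ r * S t + r * I t + P t) atTop := by
  set au := max γ r with hau_def
  set aℓ := min γ r with hal_def
  set m := min μ δ₁ with hm_def
  set M := max c δ₁ with hM_def
  have hau : 0 < au := lt_max_of_lt_left hγ
  have hal : 0 < aℓ := lt_min hγ hr
  have hm : 0 < m := lt_min hμ hδ₁
  have hM : 0 < M := lt_max_of_lt_left hc
  have hmμ : m ≤ μ := min_le_left _ _
  have hmδ : m ≤ δ₁ := min_le_right _ _
  have hmc : m ≤ c := le_of_lt (lt_of_le_of_lt hmμ hμc)
  have hMc : c ≤ M := le_max_left _ _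
  have hMδ : δ₁ ≤ M := le_max_right _ _
  have hMμ : μ ≤ M := le_of_lt (lt_of_lt_of_le hμc hMc)
  have hγau : γ ≤ au := le_max_left _ _
  have hrau : r ≤ au := le_max_right _ _
  have halγ : aℓ ≤ γ := min_le_left _ _
  have halr : aℓ ≤ r := min_le_right _ _
  have halau : aℓ ≤ au := le_trans halγ hγau
  set Θu := au * Λu / m with hΘ_def
  set W : ℝ → ℝ := fun t => au * S t + r * I t + P t with hW_def
  set V : ℝ → ℝ := fun t => aℓ * S t + r * I t + P t with hV_def
  set w : ℝ → ℝ := fun t =>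
    au * (l t - μ * S t - f (S t) (I t) (P t) * P t - β * S t * I t)
    + r * (β * S t * I t - η * g (S t) (I t) (P t) * I t - c * I t)
    + (γ * f (S t) (I t) (P t) * P t + r * η * g (S t) (I t) (P t) * I t
        - δ₁ * P t - δ₂ * (P t) ^ 2) with hw_def
  set v : ℝ → ℝ := fun t =>
    aℓ * (l t - μ * S t - f (S t) (I t) (P t) * P t - β * S t * I t)
    + r * (β * S t * I t - η * g (S t) (I t) (P t) * I t - c * I t)
    + (γ * f (S t) (I t) (P t) * P t + r * η * g (S t) (I t) (P t) * I t
        - δ₁ * P t - δ₂ * (P t) ^ 2) with hv_def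
  have hWd : ∀ t, t₀ ≤ t → HasDerivAt W (w t) t := fun t ht =>
    (((hS t ht).const_mul au).add ((hI t ht).const_mul r)).add (hP t ht)
  have hVd : ∀ t, t₀ ≤ t → HasDerivAt V (v t) t := fun t ht =>
    (((hS t ht).const_mul aℓ).add ((hI t ht).const_mul r)).add (hP t ht)
  -- basic nonnegativity / pointwise facts
  have hfacts : ∀ t, t₀ ≤ t → 0 ≤ f (S t) (I t) (P t) ∧ 0 ≤ g (S t) (I t) (P t) := by
    intro t ht
    obtain ⟨h1, h2, h3⟩ := hpos t ht
    exact ⟨hf_nonneg _ _ _ h1 h2 h3, hg_nonneg _ _ _ h1 h2 h3⟩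
  -- upper differential inequality
  have hwle : ∀ t, t₀ ≤ t → w t ≤ au * Λu - m * W t := by
    intro t ht
    obtain ⟨hS0, hI0, hP0⟩ := hpos t ht
    obtain ⟨hF, hG⟩ := hfacts t ht
    obtain ⟨hl1, hl2⟩ := hlb t
    simp only [hw_def, hW_def]
    nlinarith [mul_nonneg (mul_nonneg (sub_nonneg.mpr hγau) hF) hP0,
      mul_nonneg (mul_nonneg (mul_nonneg (sub_nonneg.mpr hrau) hβ.le) hS0) hI0,
      mul_nonneg hδ₂.le (sq_nonneg (P t)),
      mul_nonneg (mul_nonneg (sub_nonneg.mpr hmμ) hau.le) hS0,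
      mul_nonneg (mul_nonneg (sub_nonneg.mpr hmc) hr.le) hI0,
      mul_nonneg (sub_nonneg.mpr hmδ) hP0,
      mul_nonneg hau.le (sub_nonneg.mpr hl2)]
  -- upper bound eventually
  have hWev : ∀ ε > 0, ∀ᶠ t in atTop, W t ≤ Θu + ε := by
    intro ε hε
    have := gron_aux m (au * Λu) t₀ hm W w hWd hwle ε hε
    simpa [hΘ_def] using this
  have hW0 : ∀ᶠ t in atTop, 0 ≤ W t := by
    filter_upwards [eventually_ge_atTop t₀] with t ht
    obtain ⟨h1, h2, h3⟩ := hpos t ht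
    have := mul_nonneg hau.le h1
    have := mul_nonneg hr.le h2
    simp only [hW_def]; linarith
  have hcbW : IsCoboundedUnder (· ≤ ·) atTop W :=
    isCoboundedUnder_le_of_eventually_le atTop hW0
  have hlimsup : limsup W atTop ≤ Θu := by
    apply le_of_forall_pos_le_add
    intro ε hε
    exact limsup_le_of_le hcbW (hWev ε hε)
  refine ⟨hlimsup, ?_⟩
  -- lower part
  have hVW : ∀ᶠ t in atTop, V t ≤ W t := by
    filter_upwards [eventually_ge_atTop t₀] with t ht
    obtain ⟨h1, _, _⟩ := hpos t ht
    have := mul_le_mul_of_nonneg_right halau h1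
    simp only [hV_def, hW_def]; linarith
  have hVub : ∀ᶠ t in atTop, V t ≤ Θu + 1 := by
    filter_upwards [hVW, hWev 1 one_pos] with t h1 h2; linarith
  have hcbV : IsCoboundedUnder (· ≥ ·) atTop V :=
    isCoboundedUnder_ge_of_eventually_le atTop hVub
  have hV0 : ∀ᶠ t in atTop, 0 ≤ V t := by
    filter_upwards [eventually_ge_atTop t₀] with t ht
    obtain ⟨h1, h2, h3⟩ := hpos t ht
    have := mul_nonneg hal.le h1
    have := mul_nonneg hr.le h2
    simp only [hV_def]; linarith
  have hΘ0 : 0 ≤ Θu := by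
    have : 0 ≤ au * Λu := mul_nonneg hau.le (le_trans hΛℓ.le hΛ)
    exact div_nonneg this hm.le
  -- for each ε > 0 : liminf V ≥ (aℓ Λℓ - δ₂ (Θu+ε)^2)/M
  have hkey : ∀ ε > 0, (aℓ * Λℓ - δ₂ * (Θu + ε) ^ 2) / M ≤ liminf V atTop := by
    intro ε hε
    -- eventually P t ≤ Θu + ε
    have hPev : ∀ᶠ t in atTop, P t ≤ Θu + ε := by
      filter_upwards [hWev ε hε, eventually_ge_atTop t₀] with t h1 ht
      obtain ⟨h2, h3, _⟩ := hpos t ht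
      have := mul_nonneg hau.le h2
      have := mul_nonneg hr.le h3
      simp only [hW_def] at h1; linarith
    obtain ⟨T₁, hT₁⟩ := eventually_atTop.mp hPev
    set T := max t₀ T₁ with hT_def
    have hvge : ∀ t, T ≤ t → -v t ≤ -(aℓ * Λℓ - δ₂ * (Θu + ε) ^ 2) - M * (-V t) := by
      intro t ht
      have ht0 : t₀ ≤ t := le_trans (le_max_left _ _) ht
      have hPt : P t ≤ Θu + ε := hT₁ t (le_trans (le_max_right _ _) ht)
      obtain ⟨hS0, hI0, hP0⟩ := hpos t ht0
      obtain ⟨hF, hG⟩ := hfacts t ht0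
      obtain ⟨hl1, hl2⟩ := hlb t
      simp only [hv_def, hV_def]
      have hsq : (P t) ^ 2 ≤ (Θu + ε) ^ 2 := by nlinarith
      nlinarith [mul_nonneg (mul_nonneg (sub_nonneg.mpr halγ) hF) hP0,
        mul_nonneg (mul_nonneg (mul_nonneg (sub_nonneg.mpr halr) hβ.le) hS0) hI0,
        mul_nonneg (mul_nonneg (sub_nonneg.mpr hMμ) hal.le) hS0,
        mul_nonneg (mul_nonneg (sub_nonneg.mpr hMc) hr.le) hI0,
        mul_nonneg (sub_nonneg.mpr hMδ) hP0,
        mul_nonneg hal.le (sub_nonneg.mpr hl1)]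
    have hVdT : ∀ t, T ≤ t → HasDerivAt (fun s => -V s) (-v t) t := by
      intro t ht
      exact (hVd t (le_trans (le_max_left _ _) ht)).neg
    have hres := gron_aux M (-(aℓ * Λℓ - δ₂ * (Θu + ε) ^ 2)) T hM (fun s => -V s)
      (fun s => -v s) hVdT hvge
    have : ∀ ε' > 0, (aℓ * Λℓ - δ₂ * (Θu + ε) ^ 2) / M ≤ liminf V atTop + ε' := by
      intro ε' hε'
      have hev := hres ε' hε'
      have hev' : ∀ᶠ t in atTop, (aℓ * Λℓ - δ₂ * (Θu + ε) ^ 2) / M - ε' ≤ V t := by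
        filter_upwards [hev] with t h
        have : -(aℓ * Λℓ - δ₂ * (Θu + ε) ^ 2) / M = -((aℓ * Λℓ - δ₂ * (Θu + ε) ^ 2) / M) := by
          ring
        rw [this] at h
        linarith
      have := le_liminf_of_le hcbV hev'
      linarith
    exact le_of_forall_pos_le_add this
  -- pass to limit ε → 0⁺
  have hL : (aℓ * Λℓ - δ₂ * Θu ^ 2) / M ≤ liminf V atTop := by
    have htend : Tendsto (fun ε => (aℓ * Λℓ - δ₂ * (Θu + ε) ^ 2) / M)
        (nhdsWithin 0 (Set.Ioi 0)) (nhds ((aℓ * Λℓ - δ₂ * Θu ^ 2) / M)) := by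
      have hcont : Continuous (fun ε : ℝ => (aℓ * Λℓ - δ₂ * (Θu + ε) ^ 2) / M) := by
        continuity
      have := hcont.tendsto 0
      simp only [add_zero] at this
      exact this.mono_left nhdsWithin_le_nhds
    refine le_of_tendsto htend ?_
    filter_upwards [self_mem_nhdsWithin] with ε hε
    exact hkey ε hε
  have hL0 : (0:ℝ) ≤ liminf V atTop := le_liminf_of_le hcbV hV0
  exact max_le hL0 hL
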